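/- If G is a d-regular highly symmetric graph on n vertices, then R(i) := Σ_j R_{ij} is independent of the vertex i, and equals (2/d)·K, where K is the Kemeny constant of the simple random walk on G. -/

import Mathlib

open Finset Matrix Polynomial

/-- The transition matrix of the simple random walk on a graph:
`P i j = 1/deg(i)` if `i ~ j`, and `0` otherwise. -/
noncomputable def transMatrix {V : Type*} [Fintype V] (G : SimpleGraph V)
    [DecidableRel G.Adj] : Matrix V V ℝ :=
  fun i j => if G.Adj i j then (1 : ℝ) / (G.degree i) else 0

/-- The stationary distribution of the simple random walk: `π i = deg(i) / (2|E|)`. -/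
noncomputable def stationary {V : Type*} [Fintype V] [DecidableEq V] (G : SimpleGraph V)
    [DecidableRel G.Adj] : V → ℝ :=
  fun i => (G.degree i : ℝ) / (2 * G.edgeFinset.card)

/-- `H` is the table of expected hitting times of the simple random walk on `G`:
`H a b = E_a T_b`.  It is characterized by `H b b = 0` and the one-step
(first-step analysis) equations `H a b = 1 + ∑_j P a j * H j b` for `a ≠ b`. -/
def IsHittingTime {V : Type*} [Fintype V] (G : SimpleGraph V) [DecidableRel G.Adj]
    (H : V → V → ℝ) : Prop :=
  (∀ b, H b b = 0) ∧ ∀ a b, a ≠ b → H a b = 1 + ∑ j, transMatrix G a j * H j b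

/-- `R` is the table of effective resistances of `G` (unit resistor on each edge):
`R a b = v a - v b` where `v` is a potential for a unit current flow from `a` to `b`,
i.e. `L v = 1_a - 1_b` for the graph Laplacian `L`. -/
def IsEffectiveResistance {V : Type*} [Fintype V] [DecidableEq V] (G : SimpleGraph V)
    [DecidableRel G.Adj] (R : V → V → ℝ) : Prop :=
  ∀ a b, ∃ v : V → ℝ,
    G.lapMatrix ℝ *ᵥ v =
      (fun x => (if x = a then (1 : ℝ) else 0) - (if x = b then (1 : ℝ) else 0)) ∧
    R a b = v a - v b

-- sum over all vertices of (L *ᵥ f) is zero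
lemma sum_lap_mulVec {V : Type*} [Fintype V] [DecidableEq V] (G : SimpleGraph V)
    [DecidableRel G.Adj] (f : V → ℝ) : ∑ x, (G.lapMatrix ℝ *ᵥ f) x = 0 := by
  have hrow : ∀ y : V, ∑ x, G.lapMatrix ℝ x y = 0 := by
    intro y
    have h1 := congrFun (G.lapMatrix_mulVec_const_eq_zero (R := ℝ)) y
    simp only [mulVec, dotProduct, mul_one, Pi.zero_apply] at h1
    calc ∑ x, G.lapMatrix ℝ x y = ∑ x, G.lapMatrix ℝ y x := by
          refine Finset.sum_congr rfl fun x _ => ?_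
          have := congrFun (congrFun (G.isSymm_lapMatrix (R := ℝ)) y) x
          simpa using this
      _ = 0 := h1
  calc ∑ x, (G.lapMatrix ℝ *ᵥ f) x = ∑ x, ∑ y, G.lapMatrix ℝ x y * f y := rfl
    _ = ∑ y, (∑ x, G.lapMatrix ℝ x y) * f y := by
        rw [Finset.sum_comm]; simp [Finset.sum_mul]
    _ = 0 := by simp [hrow]

theorem resistance_sum_regular_HS {V : Type*} [Fintype V] [DecidableEq V]
    (G : SimpleGraph V) [DecidableRel G.Adj] (hconn : G.Connected)
    (d : ℕ) (hreg : G.IsRegularOfDegree d)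
    (H : V → V → ℝ) (hH : IsHittingTime G H) (hHS : ∀ a b, H a b = H b a)
    (R : V → V → ℝ) (hR : IsEffectiveResistance G R)
    (K : ℝ) (hK : ∀ i, ∑ j, stationary G j * H i j = K) :
    ∀ i, ∑ j, R i j = 2 / d * K := by
  obtain ⟨hH0, hH1⟩ := hH
  have hne : Nonempty V := hconn.nonempty
  have hRdiag : ∀ a, R a a = 0 := by
    intro a; obtain ⟨v, _, hv2⟩ := hR a a; simp [hv2]
  rcases eq_or_ne d 0 with hd | hd
  · -- degenerate case: d = 0, graph is a single vertex
    subst hd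
    have hall : ∀ i j : V, j = i := by
      intro i j
      obtain ⟨p⟩ := hconn j i
      cases p with
      | nil => rfl
      | cons h q =>
        exfalso
        have : 0 < G.degree j := (G.degree_pos_iff_exists_adj j).mpr ⟨_, h⟩
        rw [hreg j] at this; exact lt_irrefl 0 this
    intro i
    have : ∑ j, R i j = ∑ j : V, (0:ℝ) := by
      refine Finset.sum_congr rfl fun j _ => ?_
      rw [hall i j, hRdiag]
    simp [this]
  have hdR : (d : ℝ) ≠ 0 := Nat.cast_ne_zero.mpr hd
  set n : ℕ := Fintype.card V with hn
  have hnpos : 0 < n := Fintype.card_pos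
  have hnR : (n : ℝ) ≠ 0 := Nat.cast_ne_zero.mpr hnpos.ne'
  -- Lemma A: off-target values of L applied to hitting-time vector
  have hA : ∀ b x : V, x ≠ b → (G.lapMatrix ℝ *ᵥ fun y => H y b) x = d := by
    intro b x hxb
    rw [G.lapMatrix_mulVec_apply]
    have hnb : ∑ u ∈ G.neighborFinset x, H u b = ∑ j, (if G.Adj x j then H j b else 0) := by
      rw [G.neighborFinset_eq_filter, Finset.sum_filter]
    have hstep := hH1 x b hxb
    have htr : ∀ j, transMatrix G x j * H j b
        = (1 / (d:ℝ)) * (if G.Adj x j then H j b else 0) := by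
      intro j
      simp only [transMatrix, hreg x]
      split <;> ring
    rw [Finset.sum_congr rfl fun j _ => htr j, ← Finset.mul_sum] at hstep
    rw [hnb, hreg x]
    have : (∑ j, (if G.Adj x j then H j b else 0)) = (d:ℝ) * (H x b - 1) := by
      field_simp at hstep ⊢
      linarith
    rw [this]; ring
  -- Lemma B: the value at the target vertex
  have hB : ∀ b : V, (G.lapMatrix ℝ *ᵥ fun y => H y b) b = (d:ℝ) - n * d := by
    intro b
    have hs := sum_lap_mulVec G (fun y => H y b)
    rw [← Finset.add_sum_erase _ _ (Finset.mem_univ b)] at hs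
    have herase : ∑ x ∈ Finset.univ.erase b, (G.lapMatrix ℝ *ᵥ fun y => H y b) x
        = ((n:ℝ) - 1) * d := by
      rw [Finset.sum_congr rfl fun x hx => hA b x (Finset.ne_of_mem_erase hx)]
      rw [Finset.sum_const, Finset.card_erase_of_mem (Finset.mem_univ b), Finset.card_univ,
        nsmul_eq_mul, Nat.cast_sub hnpos]
      push_cast
      ring
    rw [herase] at hs
    linarith
  -- Commute time identity
  have hC : ∀ a b : V, a ≠ b → ((n:ℝ) * d) * R a b = H a b + H b a := by
    intro a b hab
    obtain ⟨v, hv, hvab⟩ := hR a b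
    set w : V → ℝ := fun x => (H x b - H x a) - ((n:ℝ)*d) * v x with hw
    have hker : ∀ x, (G.lapMatrix ℝ *ᵥ w) x = 0 := by
      intro x
      have hw' : w = (fun y => H y b) - (fun y => H y a) - ((n:ℝ)*d) • v := by
        funext y; simp [hw, smul_eq_mul]
      have hvx := congrFun hv x
      rw [hw', mulVec_sub, mulVec_sub, mulVec_smul]
      simp only [Pi.sub_apply, Pi.smul_apply, smul_eq_mul, hvx]
      by_cases hxa : x = a
      · rw [hxa, hA b a hab, hB a]
        simp [hab]
      · by_cases hxb : x = b
        · rw [hxb, hB b, hA a b (Ne.symm hab)]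
          simp [Ne.symm hab]
        · rw [hA b x hxb, hA a x hxa]
          simp [hxa, hxb]
    have hker' : Matrix.toLin' (G.lapMatrix ℝ) w = 0 := by
      rw [Matrix.toLin'_apply]; funext x; exact hker x
    have hconst := (G.lapMatrix_mulVec_eq_zero_iff_forall_reachable (x := w)).mp
      (by rwa [Matrix.toLin'_apply] at hker') a b
      (hconn a b)
    simp only [hw, hH0] at hconst
    rw [hvab]
    linarith
  -- stationary is 1/n and 2|E| = n*d
  have hE : (2 * G.edgeFinset.card : ℝ) = n * d := by
    have h1 : ∑ v : V, G.degree v = 2 * G.edgeFinset.card := G.sum_degrees_eq_twice_card_edges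
    have h2 : ∑ v : V, G.degree v = n * d := by
      rw [Finset.sum_congr rfl fun v _ => hreg v, Finset.sum_const, Finset.card_univ]
      simp [hn, mul_comm]
    have h3 := h1.symm.trans h2
    have h4 : ((2 * G.edgeFinset.card : ℕ) : ℝ) = ((n * d : ℕ) : ℝ) := by
      exact_mod_cast congrArg (Nat.cast : ℕ → ℝ) h3
    push_cast at h4
    linarith
  intro i
  have hKi := hK i
  have hst : ∀ j, stationary G j = 1 / (n:ℝ) := by
    intro j
    simp only [stationary, hreg j]
    rw [hE, mul_comm (n:ℝ) (d:ℝ), ← div_div, div_self hdR]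
  rw [Finset.sum_congr rfl fun j _ => by rw [hst j]] at hKi
  rw [← Finset.mul_sum] at hKi
  have hsumH : ∑ j, H i j = (n:ℝ) * K := by
    field_simp at hKi
    linarith
  have hRval : ∀ j, R i j = 2 * H i j / ((n:ℝ)*d) := by
    intro j
    by_cases hij : i = j
    · subst hij; rw [hRdiag, hH0]; simp
    · have := hC i j hij
      rw [hHS j i] at this
      field_simp
      linarith
  rw [Finset.sum_congr rfl fun j _ => hRval j]
  rw [← Finset.sum_div, ← Finset.mul_sum, hsumH]
  field_simp
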